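/- For all natural numbers k and m, the finite simple continued fraction [L_{2k+1}, L_{2k+1}, …, L_{2k+1}] consisting of m+1 copies of the odd-indexed Lucas number L_{2k+1} equals F_{(2k+1)(m+2)}/F_{(2k+1)(m+1)}. -/

import Mathlib

def cf : List ℤ → ℚ
  | [] => 0
  | [a] => (a : ℚ)
  | a :: b :: l => (a : ℚ) + (cf (b :: l))⁻¹

def lucas : ℕ → ℕ
  | 0 => 2
  | 1 => 1
  | n + 2 => lucas (n + 1) + lucas n

lemma lucas_eq_fib : ∀ n : ℕ, lucas (n + 1) = Nat.fib n + Nat.fib (n + 2) := by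
  intro n
  induction n using Nat.twoStepInduction with
  | zero => simp [lucas, Nat.fib_add_two]
  | one => simp [lucas, Nat.fib_add_two]
  | more n ih1 ih2 =>
    have h : lucas (n + 3) = lucas (n + 2) + lucas (n + 1) := rfl
    rw [h, ih1, ih2]
    have h1 : Nat.fib (n + 2) = Nat.fib n + Nat.fib (n + 1) := Nat.fib_add_two
    have h2 : Nat.fib (n + 3) = Nat.fib (n + 1) + Nat.fib (n + 2) := Nat.fib_add_two
    have h3 : Nat.fib (n + 4) = Nat.fib (n + 2) + Nat.fib (n + 3) := Nat.fib_add_two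
    ring_nf
    ring_nf at h1 h2 h3
    omega

lemma cassini (n : ℕ) :
    (Nat.fib (n + 1) : ℤ) ^ 2 - Nat.fib n * Nat.fib (n + 2) = (-1) ^ n := by
  induction n with
  | zero => simp
  | succ n ih =>
    have h2 : (Nat.fib (n + 2) : ℤ) = Nat.fib n + Nat.fib (n + 1) := by
      exact_mod_cast Nat.fib_add_two
    have h3 : (Nat.fib (n + 3) : ℤ) = Nat.fib (n + 1) + Nat.fib (n + 2) := by
      exact_mod_cast Nat.fib_add_two
    rw [pow_succ (-1 : ℤ) n]
    show (Nat.fib (n+2) : ℤ)^2 - Nat.fib (n+1) * Nat.fib (n+3) = (-1)^n * -1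
    linear_combination (-1 : ℤ) * ih + (Nat.fib (n+2) : ℤ) * h2 + (-(Nat.fib (n+1) : ℤ)) * h3

lemma key (d : ℕ) (hd : Odd d) :
    ∀ a : ℕ, (Nat.fib (a + 2 * d) : ℤ) =
      lucas d * Nat.fib (a + d) + Nat.fib a := by
  obtain ⟨e, he⟩ := hd
  subst he
  intro a
  induction a using Nat.twoStepInduction with
  | zero =>
    -- fib (2*(2e+1)) = lucas (2e+1) * fib (2e+1)
    have h := Nat.fib_add (2 * e + 1) (2 * e)
    have hl := lucas_eq_fib (2 * e)
    have hrw : 2 * e + 1 + 2 * e + 1 = 0 + 2 * (2 * e + 1) := by ring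
    rw [hrw] at h
    rw [h, hl]
    push_cast
    ring
  | one =>
    -- fib (1 + 2*(2e+1)) = lucas (2e+1) * fib (1 + (2e+1)) + 1
    have h := Nat.fib_two_mul_add_one (2 * e + 1)
    have hrw : 2 * (2 * e + 1) + 1 = 1 + 2 * (2 * e + 1) := by ring
    rw [hrw] at h
    rw [h, lucas_eq_fib (2 * e)]
    have hc := cassini (2 * e)
    have hpow : ((-1 : ℤ)) ^ (2 * e) = 1 := by
      rw [pow_mul]; norm_num
    rw [hpow] at hc
    have h1 : 1 + (2 * e + 1) = 2 * e + 2 := by ring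
    rw [h1]
    have h2 : 2 * e + 1 + 1 = 2 * e + 2 := by ring
    rw [h2]
    push_cast
    linear_combination hc
  | more a ih1 ih2 =>
    have e1 : a + 2 + 2 * (2 * e + 1) = (a + 2 * (2 * e + 1)) + 2 := by ring
    have e2 : a + 2 + (2 * e + 1) = (a + (2 * e + 1)) + 2 := by ring
    have f1 : (Nat.fib ((a + 2 * (2 * e + 1)) + 2) : ℤ) =
        Nat.fib (a + 2 * (2 * e + 1)) + Nat.fib (a + 2 * (2 * e + 1) + 1) := by
      exact_mod_cast Nat.fib_add_two
    have f2 : (Nat.fib ((a + (2 * e + 1)) + 2) : ℤ) =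
        Nat.fib (a + (2 * e + 1)) + Nat.fib (a + (2 * e + 1) + 1) := by
      exact_mod_cast Nat.fib_add_two
    have f3 : (Nat.fib (a + 2) : ℤ) = Nat.fib a + Nat.fib (a + 1) := by
      exact_mod_cast Nat.fib_add_two
    have e3 : a + 1 + 2 * (2 * e + 1) = a + 2 * (2 * e + 1) + 1 := by ring
    have e4 : a + 1 + (2 * e + 1) = a + (2 * e + 1) + 1 := by ring
    rw [e3, e4] at ih2
    rw [e1, e2, f1, f2, f3]
    linarith [ih1, ih2]

theorem cf_all_odd_lucas_fib (k m : ℕ) :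
    cf (List.replicate (m + 1) ((lucas (2 * k + 1) : ℤ))) =
      (Nat.fib ((2 * k + 1) * (m + 2)) : ℚ) /
        (Nat.fib ((2 * k + 1) * (m + 1)) : ℚ) := by
  set d := 2 * k + 1 with hd
  have hodd : Odd d := ⟨k, by omega⟩
  induction m with
  | zero =>
    have hpos : 0 < Nat.fib (d * 1) := by
      exact Nat.fib_pos.mpr (by omega)
    have hne : (Nat.fib (d * 1) : ℚ) ≠ 0 := by
      exact_mod_cast hpos.ne'
    have hkey := key d hodd 0
    simp only [zero_add] at hkey
    have : (Nat.fib (2 * d) : ℚ) = (lucas d : ℚ) * Nat.fib d := by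
      exact_mod_cast hkey
    simp only [zero_add, List.replicate_one, List.replicate_succ, List.replicate_zero, cf]
    rw [eq_div_iff (by simpa [mul_one] using hne)]
    have h1 : d * 2 = 2 * d := by ring
    have h2 : d * 1 = d := by ring
    rw [h1, h2, this]
    push_cast
    ring
  | succ m ih =>
    have hstep : cf (List.replicate (m + 1 + 1) ((lucas d : ℤ))) =
        (lucas d : ℚ) + (cf (List.replicate (m + 1) ((lucas d : ℤ))))⁻¹ := by
      rw [List.replicate_succ, List.replicate_succ]
      rcases m with _ | m
      · simp [cf]
      · rw [List.replicate_succ]; rfl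
    have hp1 : (0 : ℚ) < Nat.fib (d * (m + 1)) := by
      have : 0 < Nat.fib (d * (m + 1)) := Nat.fib_pos.mpr (Nat.mul_pos (by omega) (by omega))
      exact_mod_cast this
    have hp2 : (0 : ℚ) < Nat.fib (d * (m + 2)) := by
      have : 0 < Nat.fib (d * (m + 2)) := Nat.fib_pos.mpr (Nat.mul_pos (by omega) (by omega))
      exact_mod_cast this
    rw [hstep, ih]
    have hkey := key d hodd (d * (m + 1))
    have e1 : d * (m + 1) + 2 * d = d * (m + 1 + 2) := by ring
    have e2 : d * (m + 1) + d = d * (m + 2) := by ring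
    rw [e1, e2] at hkey
    have hkeyQ : (Nat.fib (d * (m + 1 + 2)) : ℚ) =
        (lucas d : ℚ) * Nat.fib (d * (m + 2)) + Nat.fib (d * (m + 1)) := by
      exact_mod_cast hkey
    have e3 : d * (m + 2) = d * (m + 1 + 1) := by ring
    rw [inv_div, ← e3, hkeyQ]
    field_simp
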